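/- The subspace of polyradial L¹ functions on ℍ_n (functions f with f(z,u) depending only on |z₁|,…,|z_n| and u, identifying z ∈ ℝ^{2n} with (z₁,…,z_n) ∈ ℂⁿ) is a commutative subalgebra of the convolution algebra L¹(ℍ_n): if f₁, f₂ are polyradial then f₁ ⋆ f₂ = f₂ ⋆ f₁. -/

import Mathlib

open MeasureTheory

/-- The Heisenberg group `ℍ_n = ℂⁿ × ℝ`. -/
noncomputable def HmulC (n : ℕ) (a b : (Fin n → ℂ) × ℝ) : (Fin n → ℂ) × ℝ :=
  (a.1 + b.1, a.2 + b.2 + (1 / 2) * ∑ i, (a.1 i * (starRingEnd ℂ) (b.1 i)).im)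

noncomputable def HinvC (n : ℕ) (a : (Fin n → ℂ) × ℝ) : (Fin n → ℂ) × ℝ :=
  (-a.1, -a.2)

/-- Group convolution on `ℍ_n`. -/
noncomputable def convC (n : ℕ) (f₁ f₂ : (Fin n → ℂ) × ℝ → ℂ) (g : (Fin n → ℂ) × ℝ) : ℂ :=
  ∫ h, f₁ h * f₂ (HmulC n (HinvC n h) g)

/-- `f` is polyradial if it is invariant under all torus rotations
`(z₁,…,z_n,u) ↦ (e^{iφ₁}z₁,…,e^{iφ_n}z_n,u)`. -/
def Polyradial (n : ℕ) (f : (Fin n → ℂ) × ℝ → ℂ) : Prop :=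
  ∀ φ : Fin n → ℝ, ∀ g : (Fin n → ℂ) × ℝ,
    f (fun i => Complex.exp (Complex.I * φ i) * g.1 i, g.2) = f g

section Helpers

open Complex

/-- A polyradial function only depends on the absolute values of the complex coordinates. -/
lemma polyradial_congr {n : ℕ} {f : (Fin n → ℂ) × ℝ → ℂ} (hp : Polyradial n f)
    {p q : (Fin n → ℂ) × ℝ} (h1 : ∀ i, ‖p.1 i‖ = ‖q.1 i‖)
    (h2 : p.2 = q.2) : f p = f q := by
  classical
  obtain ⟨z', u'⟩ := p
  obtain ⟨z, u⟩ := q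
  simp only at h1 h2
  subst h2
  have key : (fun i => Complex.exp (Complex.I * ((z' i / z i).arg : ℝ)) * z i) = z' := by
    funext i
    by_cases hz : z i = 0
    · have hz' : z' i = 0 := by
        have := h1 i; rw [hz] at this; simpa using this
      simp [hz, hz']
    · have hne : ‖z i‖ ≠ 0 := by simpa using hz
      have habs : ‖z' i / z i‖ = 1 := by
        rw [norm_div, h1 i, div_self hne]
      have h2 := Complex.norm_mul_exp_arg_mul_I (z' i / z i)
      rw [habs, Complex.ofReal_one, one_mul] at h2
      rw [mul_comm Complex.I, h2]
      field_simp
  have := hp (fun i => (z' i / z i).arg) (z, u')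
  simpa only [key] using this

/-- The unit complex number used to reflect coordinate `i` across the line through `w i`. -/
noncomputable def cC {n : ℕ} (w : Fin n → ℂ) (i : Fin n) : ℂ :=
  if w i = 0 then 1 else w i / (starRingEnd ℂ) (w i)

lemma abs_cC {n : ℕ} (w : Fin n → ℂ) (i : Fin n) : ‖cC w i‖ = 1 := by
  unfold cC
  split_ifs with h
  · simp
  · rw [norm_div, Complex.norm_conj, div_self]
    simpa using h

/-- The reflection `z_i ↦ c_i conj z_i`. -/
noncomputable def sigmaC {n : ℕ} (w : Fin n → ℂ) (z : Fin n → ℂ) : Fin n → ℂ :=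
  fun i => cC w i * (starRingEnd ℂ) (z i)

lemma sigmaC_abs {n : ℕ} (w z : Fin n → ℂ) (i : Fin n) :
    ‖sigmaC w z i‖ = ‖z i‖ := by
  simp [sigmaC, abs_cC]

lemma sigmaC_invol {n : ℕ} (w z : Fin n → ℂ) : sigmaC w (sigmaC w z) = z := by
  funext i
  simp only [sigmaC, map_mul, RingHomCompTriple.comp_apply, RingHom.id_apply, Complex.conj_conj]
  rw [← mul_assoc, Complex.mul_conj, Complex.normSq_eq_norm_sq, abs_cC]
  simp

lemma sigmaC_sub {n : ℕ} (w z : Fin n → ℂ) (i : Fin n) :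
    w i - sigmaC w z i = cC w i * (starRingEnd ℂ) (w i - z i) := by
  unfold sigmaC cC
  split_ifs with h
  · simp [h]
  · have hc : (starRingEnd ℂ) (w i) ≠ 0 := by simpa using h
    field_simp
    simp only [map_sub]

lemma sigmaC_im {n : ℕ} (w z : Fin n → ℂ) (i : Fin n) :
    (sigmaC w z i * (starRingEnd ℂ) (w i)).im = (w i * (starRingEnd ℂ) (z i)).im := by
  by_cases h : w i = 0
  · simp [sigmaC, cC, h]
  · have hc : (starRingEnd ℂ) (w i) ≠ 0 := by simpa using h
    have : sigmaC w z i * (starRingEnd ℂ) (w i) = w i * (starRingEnd ℂ) (z i) := by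
      unfold sigmaC cC
      rw [if_neg h]
      field_simp
    rw [this]

lemma measurePreserving_mul_conj (c : ℂ) (hc : ‖c‖ = 1) :
    MeasurePreserving (fun z : ℂ => c * (starRingEnd ℂ) z) volume volume := by
  have hmem : c ∈ Submonoid.unitSphere ℂ := by
    simpa [Submonoid.unitSphere, Metric.mem_sphere, Complex.dist_eq] using hc
  have h := (Complex.conjLIE.trans (rotation (⟨c, hmem⟩ : Circle))).measurePreserving
  convert h using 1
  · rfl
  · rfl
  · funext z; exact (rotation_apply (⟨c, hmem⟩ : Circle) ((starRingEnd ℂ) z)).symm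

lemma measurePreserving_sigmaC {n : ℕ} (w : Fin n → ℂ) :
    MeasurePreserving (sigmaC w) volume volume :=
  measurePreserving_pi _ _ (fun i => measurePreserving_mul_conj (cC w i) (abs_cC w i))

lemma im_anti (a b : ℂ) : (a * (starRingEnd ℂ) b).im = -((b * (starRingEnd ℂ) a).im) := by
  simp [Complex.mul_im]
  ring

end Helpers

theorem polyradial_convolution_commutes (n : ℕ)
    (f₁ f₂ : (Fin n → ℂ) × ℝ → ℂ)
    (hf₁ : Integrable f₁) (hf₂ : Integrable f₂)
    (hp₁ : Polyradial n f₁) (hp₂ : Polyradial n f₂) :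
    ∀ g, convC n f₁ f₂ g = convC n f₂ f₁ g := by
  intro g
  obtain ⟨w, v⟩ := g
  classical
  set T : (Fin n → ℂ) × ℝ → (Fin n → ℂ) × ℝ := fun p => HmulC n (w, v) (HinvC n p) with hT
  set iT : (Fin n → ℂ) × ℝ → (Fin n → ℂ) × ℝ := fun p => HmulC n (HinvC n p) (w, v) with hiT
  set Φ : (Fin n → ℂ) × ℝ → (Fin n → ℂ) × ℝ := fun p => (sigmaC w p.1, p.2) with hΦ
  -- iT ∘ T = id
  have hiTT : ∀ k, iT (T k) = k := by
    intro k
    simp only [hT, hiT, HmulC, HinvC]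
    refine Prod.ext ?_ ?_
    · funext i; simp
    · simp only
      have h1 : ∀ i : Fin n, ((-(w + -k.1)) i * (starRingEnd ℂ) (w i)).im
          = (w i * (starRingEnd ℂ) ((-k.1) i)).im - (w i * (starRingEnd ℂ) (w i)).im := by
        intro i
        simp [Complex.mul_im, Complex.mul_re]
        ring
      rw [Finset.sum_congr rfl (fun i _ => h1 i), Finset.sum_sub_distrib]
      have h2 : ∀ i : Fin n, (w i * (starRingEnd ℂ) (w i)).im = 0 := by
        intro i; simp [Complex.mul_im]; ring
      rw [Finset.sum_congr rfl (fun i _ => h2 i), Finset.sum_const_zero]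
      ring
  -- measure preservation of T
  have hTmp : MeasurePreserving T volume volume := by
    rw [MeasureTheory.Measure.volume_eq_prod]
    exact MeasurePreserving.skew_product
      (f := fun z : Fin n → ℂ => w + -z)
      (g := fun z u => v + -u + (1 / 2) * ∑ i, (w i * (starRingEnd ℂ) (-(z i))).im)
      ((measurePreserving_add_left volume w).comp (Measure.measurePreserving_neg volume))
      (by
        apply Measurable.add
        · exact measurable_const.add measurable_snd.neg
        · apply Measurable.const_mul
          apply Finset.measurable_sum
          intro i _
          exact Complex.measurable_im.comp
            (measurable_const.mul (Complex.continuous_conj.measurable.comp (((measurable_pi_apply i).comp measurable_fst).neg))))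
      (Filter.Eventually.of_forall fun z =>
        (((measurePreserving_add_right volume ((1 / 2) * ∑ i, (w i * (starRingEnd ℂ) (-(z i))).im)).comp
          ((measurePreserving_add_left volume v).comp
            (Measure.measurePreserving_neg volume)))).map_eq)
  have hΦmp : MeasurePreserving Φ volume volume := by
    rw [MeasureTheory.Measure.volume_eq_prod]
    exact (measurePreserving_sigmaC w).prod (MeasurePreserving.id _)
  have hΦΦ : ∀ p, Φ (Φ p) = p := by
    intro p
    simp [hΦ, sigmaC_invol]
  have hTemb : MeasurableEmbedding T :=
    hTmp.measurable.measurableEmbedding (fun a b hab => by rw [← hiTT a, hab, hiTT])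
  have hΦemb : MeasurableEmbedding Φ :=
    hΦmp.measurable.measurableEmbedding (fun a b hab => by rw [← hΦΦ a, hab, hΦΦ])
  have key1 : ∀ k, f₁ (Φ k) = f₁ k :=
    fun k => polyradial_congr hp₁ (fun i => sigmaC_abs w k.1 i) rfl
  have key2 : ∀ k, f₂ (iT (Φ k)) = f₂ (T k) := by
    intro k
    refine polyradial_congr hp₂ ?_ ?_
    · intro i
      show ‖(-(sigmaC w k.1) + w) i‖ = ‖(w + -k.1) i‖
      simp only [Pi.add_apply, Pi.neg_apply]
      rw [neg_add_eq_sub, sigmaC_sub, norm_mul, abs_cC, one_mul, Complex.norm_conj,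
        ← sub_eq_add_neg]
    · show ((HmulC n (HinvC n (Φ k)) (w, v))).2 = ((HmulC n (w, v) (HinvC n k))).2
      simp only [hΦ, HmulC, HinvC]
      have hterm : ∀ i : Fin n, ((-(sigmaC w k.1)) i * (starRingEnd ℂ) (w i)).im
          = (w i * (starRingEnd ℂ) ((-k.1) i)).im := by
        intro i
        simp only [Pi.neg_apply, neg_mul, Complex.neg_im, map_neg, mul_neg]
        rw [sigmaC_im]
      rw [Finset.sum_congr rfl (fun i _ => hterm i)]
      ring
  calc convC n f₁ f₂ (w, v) = ∫ h, f₁ h * f₂ (iT h) := rfl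
    _ = ∫ k, f₁ (Φ k) * f₂ (iT (Φ k)) :=
        (hΦmp.integral_comp hΦemb (fun h => f₁ h * f₂ (iT h))).symm
    _ = ∫ k, f₂ (T k) * f₁ (iT (T k)) := by
        refine integral_congr_ae (Filter.Eventually.of_forall fun k => ?_)
        show f₁ (Φ k) * f₂ (iT (Φ k)) = f₂ (T k) * f₁ (iT (T k))
        rw [key1 k, key2 k, hiTT k, mul_comm]
    _ = ∫ h, f₂ h * f₁ (iT h) := hTmp.integral_comp hTemb (fun h => f₂ h * f₁ (iT h))
    _ = convC n f₂ f₁ (w, v) := rfl
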